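/- Let g = 2, let e_1, …, e_6 ∈ ℂ, let f(x) = ∏_{m=1}^{6}(x − e_m) = ∑_{k=0}^{6} λ_k x^k with Kleinian 2-polar F(x,z), and for each 3-element subset S of {1,…,6} let Λ^{[S]} be the unique symmetric 2×2 matrix with P_S(x)P_{S^c}(z) + P_S(z)P_{S^c}(x) − F(x,z) = (x−z)² ∑_{i,j=1}^{2} Λ^{[S]}_{ij} x^{i−1} z^{j−1}. Then (1/2) ∑_S Λ^{[S]} = [[4λ_2, λ_3], [λ_3, 4λ_4]], where the sum runs over all 20 subsets S of size 3 (equivalently, the sum over the 10 unordered partitions {S, S^c} equals this matrix). -/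

import Mathlib

open Finset

private lemma sum_P3_aux (e : Fin 6 → ℂ) (lam : ℕ → ℂ)
    (hlam : ∀ x : ℂ, ∏ m, (x - e m) = ∑ k ∈ Finset.range 7, lam k * x ^ k)
    (x z : ℂ) :
    ∑ S ∈ Finset.powersetCard 3 (Finset.univ : Finset (Fin 6)),
        (∏ i ∈ S, (x - e i)) * (∏ j ∈ Sᶜ, (z - e j))
    = 20*lam 0 + 10*lam 1*(x+z) + lam 2*(4*z^2+12*x*z+4*x^2)
      + lam 3*(z^3+9*x*z^2+9*x^2*z+x^3) + lam 4*(4*x*z^3+12*x^2*z^2+4*x^3*z)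
      + lam 5*(10*x^2*z^3+10*x^3*z^2) + 20*lam 6*x^3*z^3 := by
  have key : ∀ t : ℂ, ∏ i, (t*(x - e i) + (z - e i))
      = ∑ k ∈ Finset.range 7,
          (∑ S ∈ Finset.powersetCard k (Finset.univ : Finset (Fin 6)),
            (∏ i ∈ S, (x - e i)) * (∏ j ∈ Sᶜ, (z - e j))) * t ^ k := by
    intro t
    rw [Finset.prod_add, Finset.sum_powerset,
      show ((Finset.univ : Finset (Fin 6)).card + 1) = 7 by simp]
    refine Finset.sum_congr rfl fun k hk => ?_
    rw [Finset.sum_mul]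
    refine Finset.sum_congr rfl fun S hS => ?_
    have hcard : S.card = k := (Finset.mem_powersetCard.mp hS).2
    rw [Finset.prod_mul_distrib, Finset.prod_const, hcard, ← Finset.compl_eq_univ_sdiff]
    ring
  have shift : ∀ t : ℂ, (1+t) ≠ 0 → ∏ i, (t*(x - e i) + (z - e i))
      = (1+t)^6 * ∑ k ∈ Finset.range 7, lam k * ((t*x+z)/(1+t))^k := by
    intro t ht
    calc ∏ i, (t*(x - e i) + (z - e i))
        = ∏ i, ((1+t) * ((t*x+z)/(1+t) - e i)) := by
          refine Finset.prod_congr rfl fun i _ => ?_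
          field_simp
          ring
      _ = (1+t)^6 * ∏ i, ((t*x+z)/(1+t) - e i) := by
          rw [Finset.prod_mul_distrib, Finset.prod_const]
          norm_num
      _ = (1+t)^6 * ∑ k ∈ Finset.range 7, lam k * ((t*x+z)/(1+t))^k := by
          rw [hlam]
  have h0 := (key 0).symm.trans (shift 0 (by norm_num))
  have h1 := (key 1).symm.trans (shift 1 (by norm_num))
  have h2 := (key 2).symm.trans (shift 2 (by norm_num))
  have h3 := (key 3).symm.trans (shift 3 (by norm_num))
  have h4 := (key 4).symm.trans (shift 4 (by norm_num))
  have h5 := (key 5).symm.trans (shift 5 (by norm_num))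
  have h6 := (key 6).symm.trans (shift 6 (by norm_num))
  simp only [Finset.sum_range_succ, Finset.sum_range_zero] at h0 h1 h2 h3 h4 h5 h6
  linear_combination (-49/48:ℂ)*h0 + (29/6:ℂ)*h1 + (-461/48:ℂ)*h2 + (31/3:ℂ)*h3
    + (-307/48:ℂ)*h4 + (13/6:ℂ)*h5 + (-5/16:ℂ)*h6

/-- genus 2, equation (4.2) of the paper, rational part: summing the
partition matrices `Λ^{[S]}` over all 20 subsets `S` of size 3 (twice the 10 unordered
partitions) and halving gives `Λ_2 = [[4λ_2, λ_3], [λ_3, 4λ_4]]`. -/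
theorem genus_two_residual_matrix_sum
    (e : Fin 6 → ℂ)
    (lam : ℕ → ℂ)
    (hlam : ∀ x : ℂ, ∏ m, (x - e m) = ∑ k ∈ Finset.range 7, lam k * x ^ k)
    (F : ℂ → ℂ → ℂ)
    (hF : ∀ x z : ℂ, F x z = 2 * lam 6 * x ^ 3 * z ^ 3
        + ∑ k ∈ Finset.range 3,
            x ^ k * z ^ k * (2 * lam (2 * k) + (x + z) * lam (2 * k + 1)))
    (L : Finset (Fin 6) → Matrix (Fin 2) (Fin 2) ℂ)
    (hLsymm : ∀ S ∈ Finset.powersetCard 3 (Finset.univ : Finset (Fin 6)), (L S).IsSymm)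
    (hL : ∀ S ∈ Finset.powersetCard 3 (Finset.univ : Finset (Fin 6)), ∀ x z : ℂ,
        (∏ i ∈ S, (x - e i)) * (∏ j ∈ Sᶜ, (z - e j))
          + (∏ i ∈ S, (z - e i)) * (∏ j ∈ Sᶜ, (x - e j)) - F x z
        = (x - z) ^ 2 * ∑ a, ∑ b, L S a b * x ^ (a : ℕ) * z ^ (b : ℕ)) :
    (1 / 2 : ℂ) • ∑ S ∈ Finset.powersetCard 3 (Finset.univ : Finset (Fin 6)), L S
      = !![4 * lam 2, lam 3; lam 3, 4 * lam 4] := by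
  set P3 := Finset.powersetCard 3 (Finset.univ : Finset (Fin 6)) with hP3
  set M := ∑ S ∈ P3, L S with hMdef
  have hM : ∀ a b : Fin 2, M a b = ∑ S ∈ P3, L S a b := by
    intro a b; rw [hMdef]; simp [Matrix.sum_apply]
  have hcard : P3.card = 20 := by
    rw [hP3, Finset.card_powersetCard]; decide
  have hsum : ∀ x z : ℂ,
      (∑ S ∈ P3, (∏ i ∈ S, (x - e i)) * (∏ j ∈ Sᶜ, (z - e j)))
        + (∑ S ∈ P3, (∏ i ∈ S, (z - e i)) * (∏ j ∈ Sᶜ, (x - e j)))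
        - 20 * F x z
      = (x - z) ^ 2 * (M 0 0 + M 1 0 * x + M 0 1 * z + M 1 1 * (x * z)) := by
    intro x z
    have h1 : ∑ S ∈ P3,
        ((∏ i ∈ S, (x - e i)) * (∏ j ∈ Sᶜ, (z - e j))
          + (∏ i ∈ S, (z - e i)) * (∏ j ∈ Sᶜ, (x - e j)) - F x z)
        = ∑ S ∈ P3, (x - z) ^ 2 * ∑ a, ∑ b, L S a b * x ^ (a : ℕ) * z ^ (b : ℕ) :=
      Finset.sum_congr rfl fun S hS => hL S hS x z
    rw [Finset.sum_sub_distrib, Finset.sum_add_distrib, Finset.sum_const, hcard,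
      ← Finset.mul_sum] at h1
    have h2 : ∑ S ∈ P3, ∑ a, ∑ b, L S a b * x ^ (a : ℕ) * z ^ (b : ℕ)
        = M 0 0 + M 1 0 * x + M 0 1 * z + M 1 1 * (x * z) := by
      simp only [Fin.sum_univ_two, Fin.val_zero, Fin.val_one, pow_zero, pow_one,
        Finset.sum_add_distrib, ← Finset.sum_mul, ← Finset.mul_sum]
      rw [hM 0 0, hM 1 0, hM 0 1, hM 1 1]
      ring
    rw [h2] at h1
    rw [← h1]
    -- (no cast cleanup needed)
    ring
  have key : ∀ x z : ℂ,
      (x - z) ^ 2 * (M 0 0 + M 1 0 * x + M 0 1 * z + M 1 1 * (x * z))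
      = (x - z) ^ 2 * (8 * lam 2 + 2 * lam 3 * (x + z) + 8 * lam 4 * (x * z)) := by
    intro x z
    have hq1 := sum_P3_aux e lam hlam x z
    have hq2 := sum_P3_aux e lam hlam z x
    have h3 := hsum x z
    have h4 := hF x z
    simp only [Finset.sum_range_succ, Finset.sum_range_zero] at h4
    norm_num at h4
    linear_combination -h3 + hq1 + hq2 - 20 * h4
  have hM10 : M 1 0 = M 0 1 := by
    rw [hM 1 0, hM 0 1]
    refine Finset.sum_congr rfl fun S hS => ?_
    have h := congrFun (congrFun (hLsymm S hS) 0) 1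
    simpa [Matrix.transpose_apply] using h
  have eA : M 0 0 + M 1 0 = 8 * lam 2 + 2 * lam 3 := by linear_combination key 1 0
  have eB : M 0 0 + 2 * M 1 0 = 8 * lam 2 + 4 * lam 3 := by
    linear_combination (1/4 : ℂ) * key 2 0
  have eC : M 0 0 + M 1 0 - M 0 1 - M 1 1 = 8 * lam 2 - 8 * lam 4 := by
    linear_combination (1/4 : ℂ) * key 1 (-1)
  have e00 : M 0 0 = 8 * lam 2 := by linear_combination 2 * eA - eB
  have e10 : M 1 0 = 2 * lam 3 := by linear_combination eB - eA
  have e01 : M 0 1 = 2 * lam 3 := by linear_combination e10 - hM10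
  have e11 : M 1 1 = 8 * lam 4 := by linear_combination e00 + e10 - e01 - eC
  rw [Matrix.eta_fin_two M, e00, e01, e10, e11]
  ext i j
  fin_cases i <;> fin_cases j <;> simp <;> ring
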